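/- Fix T > ε > 0, n ∈ ℕ, γ ∈ ℝ \ {0}, and let A, B ∈ M_n(ℝ) be symmetric matrices with AB = BA. Define C(t) = (e^{γt}/γ)·A + t·B for t ∈ ℝ. Let V_ε ∈ M_n(ℝ) be positive definite and let V: [ε,T] → M_n(ℝ) be a continuous function with V(t) positive semidefinite for each t, differentiable on (ε,T), satisfying V(ε) = V_ε and dV(t)/dt ⪰ V(t)² + (e^{γt}A + B)·V(t) + V(t)·(e^{γt}A + B) for all t ∈ (ε,T). Then for all t ∈ [ε,T]: (i) V(t) ⪯ e^{C(t)−C(T)} · ( Id_n + V(T) · ∫_t^T e^{2C(s)−2C(T)} ds )^{-1} · V(T) · e^{C(t)−C(T)}; (ii) V(t) ⪰ e^{C(t)−C(ε)} · ( Id_n − V(ε) · ∫_ε^t e^{2C(s)−2C(ε)} ds )^{-1} · V(ε) · e^{C(t)−C(ε)}; moreover the right-hand side of (ii) is well-defined and positive definite for every t ∈ (ε,T). -/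

import Mathlib

open MeasureTheory

/-- The matrix curve `C(t) = (e^{γt}/γ)·A + t·B`. -/
noncomputable def Cmat {n : ℕ} (A B : Matrix (Fin n) (Fin n) ℝ) (γ t : ℝ) :
    Matrix (Fin n) (Fin n) ℝ :=
  (Real.exp (γ * t) / γ) • A + t • B

namespace Stmt12Aux
open NormedSpace intervalIntegral
open scoped Matrix
attribute [local instance] Matrix.linftyOpNormedRing Matrix.linftyOpNormedAlgebra
open scoped MatrixOrder

variable {n : ℕ} {A B : Matrix (Fin n) (Fin n) ℝ} {γ : ℝ}

/-- entrywise derivatives give a matrix-valued derivative -/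
lemma entry_hasDerivAt {f : ℝ → Matrix (Fin n) (Fin n) ℝ} {f' : Matrix (Fin n) (Fin n) ℝ}
    {t : ℝ} (h : ∀ i j, HasDerivAt (fun s => f s i j) (f' i j) t) : HasDerivAt f f' t := by
  have h2 : HasDerivAt (fun s => ∑ i : Fin n, ∑ j : Fin n,
      Matrix.single i j (f s i j)) (∑ i : Fin n, ∑ j : Fin n,
      Matrix.single i j (f' i j)) t := by
    refine HasDerivAt.fun_sum fun i _ => HasDerivAt.fun_sum fun j _ => ?_
    simpa [Matrix.smul_single, smul_smul] using
      (h i j).smul_const (Matrix.single i j (1:ℝ))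
  simpa [← Matrix.matrix_eq_sum_single] using h2

/-- the bilinear form `M ↦ x ⬝ᵥ M *ᵥ y` as a continuous linear map -/
noncomputable def quadCLM (x y : Fin n → ℝ) : Matrix (Fin n) (Fin n) ℝ →L[ℝ] ℝ :=
  LinearMap.toContinuousLinearMap
    { toFun := fun M => x ⬝ᵥ M.mulVec y
      map_add' := by intros; simp [Matrix.add_mulVec, dotProduct_add]
      map_smul' := by intros; simp [Matrix.smul_mulVec, dotProduct_smul] }

@[simp] lemma quadCLM_apply (x y : Fin n → ℝ) (M : Matrix (Fin n) (Fin n) ℝ) :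
    quadCLM x y M = x ⬝ᵥ M.mulVec y := rfl

lemma isHermitian_of_isSymm {M : Matrix (Fin n) (Fin n) ℝ} (h : M.IsSymm) : M.IsHermitian := by
  rw [Matrix.IsHermitian, Matrix.conjTranspose_eq_transpose_of_trivial]; exact h

lemma psd_quad {M : Matrix (Fin n) (Fin n) ℝ} (h : M.PosSemidef) (x : Fin n → ℝ) :
    0 ≤ x ⬝ᵥ M.mulVec x := by simpa using (Matrix.posSemidef_iff_dotProduct_mulVec.mp h).2 x

lemma psd_of_quad {M : Matrix (Fin n) (Fin n) ℝ} (hH : M.IsHermitian)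
    (h : ∀ x, 0 ≤ x ⬝ᵥ M.mulVec x) : M.PosSemidef :=
  Matrix.posSemidef_iff_dotProduct_mulVec.mpr ⟨hH, fun x => by simpa using h x⟩


lemma psd_sub_of_hasDerivAt {f f' : ℝ → Matrix (Fin n) (Fin n) ℝ} {a b : ℝ}
    (hherm : ∀ t ∈ Set.Icc a b, (f t).IsHermitian)
    (hcont : ContinuousOn f (Set.Icc a b))
    (hd : ∀ t ∈ Set.Ioo a b, HasDerivAt f (f' t) t)
    (hpsd : ∀ t ∈ Set.Ioo a b, (f' t).PosSemidef)
    {s t : ℝ} (hs : s ∈ Set.Icc a b) (ht : t ∈ Set.Icc a b) (hst : s ≤ t) :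
    (f t - f s).PosSemidef := by
  refine psd_of_quad ((hherm t ht).sub (hherm s hs)) fun x => ?_
  have hg : ∀ u ∈ Set.Ioo a b, HasDerivAt (fun v => quadCLM x x (f v)) (quadCLM x x (f' u)) u :=
    fun u hu => (quadCLM x x).hasFDerivAt.comp_hasDerivAt u (hd u hu)
  have hmono : MonotoneOn (fun v => quadCLM x x (f v)) (Set.Icc a b) := by
    refine monotoneOn_of_deriv_nonneg (convex_Icc a b)
      ((quadCLM x x).continuous.comp_continuousOn hcont) ?_ ?_
    · rw [interior_Icc]
      exact fun u hu => (hg u hu).differentiableAt.differentiableWithinAt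
    · rw [interior_Icc]
      intro u hu
      rw [(hg u hu).deriv]
      simpa using psd_quad (hpsd u hu) x
  have h2 := hmono hs ht hst
  simp only [quadCLM_apply] at h2
  simpa [Matrix.sub_mulVec, dotProduct_sub, sub_nonneg] using h2

lemma psd_conj {M P : Matrix (Fin n) (Fin n) ℝ} (h : M.PosSemidef) (hP : P.IsHermitian) :
    (P * M * P).PosSemidef := by
  have := h.mul_mul_conjTranspose_same P
  rwa [hP.eq] at this

lemma posdef_conj {M P : Matrix (Fin n) (Fin n) ℝ} (h : M.PosDef) (hP : P.IsHermitian)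
    (hu : IsUnit P) : (P * M * P).PosDef := by
  have hPt : Pᵀ = P := by rw [← Matrix.conjTranspose_eq_transpose_of_trivial]; exact hP.eq
  have hMt : Mᵀ = M := by rw [← Matrix.conjTranspose_eq_transpose_of_trivial]; exact h.1.eq
  rw [Matrix.posDef_iff_dotProduct_mulVec]
  constructor
  · show (P * M * P)ᴴ = P * M * P
    simp [Matrix.conjTranspose_mul, Matrix.conjTranspose_eq_transpose_of_trivial,
      hPt, hMt, Matrix.mul_assoc]
  · intro x hx
    have hy : P.mulVec x ≠ 0 := by
      intro h0
      exact hx (Matrix.mulVec_injective_iff_isUnit.mpr hu (h0.trans (Matrix.mulVec_zero P).symm))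
    have h1 := (Matrix.posDef_iff_dotProduct_mulVec.mp h).2 hy
    simp only [star_trivial] at h1 ⊢
    calc (0:ℝ) < (P.mulVec x) ⬝ᵥ (M.mulVec (P.mulVec x)) := h1
    _ = x ⬝ᵥ ((P * M * P).mulVec x) := by
        rw [← Matrix.mulVec_mulVec, ← Matrix.mulVec_mulVec, Matrix.dotProduct_mulVec x,
          ← Matrix.mulVec_transpose, hPt]

lemma inv_sub_one_psd {M : Matrix (Fin n) (Fin n) ℝ} (hM : M.PosDef)
    (h : ((1 : Matrix (Fin n) (Fin n) ℝ) - M).PosSemidef) : (M⁻¹ - 1).PosSemidef := by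
  set S := CFC.sqrt M with hSdef
  have hSS : S * S = M := CFC.sqrt_mul_sqrt_self M hM.posSemidef.nonneg
  have hSherm : S.IsHermitian := by simpa using (CFC.sqrt_nonneg M).1
  have hSdet : IsUnit S.det := by
    have h2 : S.det * S.det = M.det := by rw [← Matrix.det_mul, hSS]
    refine isUnit_iff_ne_zero.mpr fun h0 => ?_
    rw [h0, mul_zero] at h2
    exact hM.det_pos.ne' h2.symm
  have hS1 : S⁻¹ * S = 1 := Matrix.nonsing_inv_mul S hSdet
  have hS2 : S * S⁻¹ = 1 := Matrix.mul_nonsing_inv S hSdet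
  have hIherm : (S⁻¹).IsHermitian := hSherm.inv
  have e1 : S⁻¹ * M * S⁻¹ = 1 := by
    rw [← hSS, ← mul_assoc, mul_assoc S⁻¹ S S]
    rw [show S⁻¹ * (S * S) = S⁻¹ * S * S from (mul_assoc _ _ _).symm, hS1, one_mul, hS2]
  have e2 : S⁻¹ * 1 * S⁻¹ = M⁻¹ := by
    rw [mul_one, ← Matrix.mul_inv_rev, hSS]
  have hconj : S⁻¹ * (1 - M) * S⁻¹ = M⁻¹ - 1 := by
    rw [mul_sub, sub_mul, e1, mul_one]
    rw [show S⁻¹ * S⁻¹ = S⁻¹ * 1 * S⁻¹ by rw [mul_one], e2]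
  rw [← hconj]
  exact psd_conj h hIherm

/-- antitonicity of matrix inverse: `0 ≺ P ⪯ Q` implies `Q` pos. def. and `Q⁻¹ ⪯ P⁻¹`. -/
lemma inv_antitone {P Q : Matrix (Fin n) (Fin n) ℝ} (hP : P.PosDef)
    (hQP : (Q - P).PosSemidef) : Q.PosDef ∧ (P⁻¹ - Q⁻¹).PosSemidef := by
  have hQ : Q.PosDef := by
    have := hP.add_posSemidef hQP
    rwa [add_sub_cancel] at this
  refine ⟨hQ, ?_⟩
  set S := CFC.sqrt Q with hSdef
  have hSS : S * S = Q := CFC.sqrt_mul_sqrt_self Q hQ.posSemidef.nonneg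
  have hSherm : S.IsHermitian := by simpa using (CFC.sqrt_nonneg Q).1
  have hSdet : IsUnit S.det := by
    have h2 : S.det * S.det = Q.det := by rw [← Matrix.det_mul, hSS]
    refine isUnit_iff_ne_zero.mpr fun h0 => ?_
    rw [h0, mul_zero] at h2
    exact hQ.det_pos.ne' h2.symm
  have hSu : IsUnit S := (Matrix.isUnit_iff_isUnit_det S).mpr hSdet
  have hS1 : S⁻¹ * S = 1 := Matrix.nonsing_inv_mul S hSdet
  have hS2 : S * S⁻¹ = 1 := Matrix.mul_nonsing_inv S hSdet
  have hIherm : (S⁻¹).IsHermitian := hSherm.inv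
  have hIu : IsUnit S⁻¹ := by
    refine (Matrix.isUnit_iff_isUnit_det _).mpr ?_
    rw [Matrix.det_nonsing_inv]
    exact isUnit_ringInverse.mpr hSdet
  set N := S⁻¹ * P * S⁻¹ with hNdef
  have hNpd : N.PosDef := posdef_conj hP hIherm hIu
  have eQ : S⁻¹ * Q * S⁻¹ = 1 := by
    rw [← hSS, ← mul_assoc, mul_assoc S⁻¹ S S]
    rw [show S⁻¹ * (S * S) = S⁻¹ * S * S from (mul_assoc _ _ _).symm, hS1, one_mul, hS2]
  have h1N : ((1 : Matrix (Fin n) (Fin n) ℝ) - N).PosSemidef := by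
    have := psd_conj hQP hIherm
    rwa [mul_sub, sub_mul, eQ, ← hNdef] at this
  have hkey := inv_sub_one_psd hNpd h1N
  -- N⁻¹ = S * P⁻¹ * S
  have hNinv : N⁻¹ = S * P⁻¹ * S := by
    rw [hNdef, Matrix.mul_inv_rev, Matrix.mul_inv_rev, Matrix.nonsing_inv_nonsing_inv S hSdet]
    rw [mul_assoc]
  have hconj : S⁻¹ * (N⁻¹ - 1) * S⁻¹ = P⁻¹ - Q⁻¹ := by
    rw [mul_sub, sub_mul, mul_one, hNinv]
    congr 1
    · rw [← mul_assoc, ← mul_assoc, hS1, one_mul, mul_assoc, hS2, mul_one]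
    · rw [← Matrix.mul_inv_rev, hSS]
  rw [← hconj]
  exact psd_conj hkey hIherm

lemma commute_lin (hAB : Commute A B) (a b c d : ℝ) :
    Commute (a • A + b • B) (c • A + d • B) := by
  have h1 : Commute (a • A) (c • A) := ((Commute.refl A).smul_left a).smul_right c
  have h2 : Commute (a • A) (d • B) := (hAB.smul_left a).smul_right d
  have h3 : Commute (b • B) (c • A) := (hAB.symm.smul_left b).smul_right c
  have h4 : Commute (b • B) (d • B) := ((Commute.refl B).smul_left b).smul_right d
  exact (h1.add_right h2).add_left (h3.add_right h4)

lemma commute_exp_lin (hAB : Commute A B) (a b c d : ℝ) :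
    Commute (a • A + b • B) (exp (c • A + d • B)) :=
  (commute_lin hAB a b c d).exp_right

lemma exp_lin_mul (hAB : Commute A B) (a b c d : ℝ) :
    exp ((a + c) • A + (b + d) • B) = exp (a • A + b • B) * exp (c • A + d • B) := by
  rw [show (a + c) • A + (b + d) • B = (a • A + b • B) + (c • A + d • B) by module]
  exact Matrix.exp_add_of_commute _ _ (commute_lin hAB a b c d)

lemma isSymm_lin (hA : A.IsSymm) (hB : B.IsSymm) (a b : ℝ) : (a • A + b • B).IsSymm := by
  unfold Matrix.IsSymm
  rw [Matrix.transpose_add, Matrix.transpose_smul, Matrix.transpose_smul, hA, hB]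

lemma isHermitian_exp_lin (hA : A.IsSymm) (hB : B.IsSymm) (a b : ℝ) :
    (exp (a • A + b • B)).IsHermitian := by
  rw [Matrix.IsHermitian, Matrix.conjTranspose_eq_transpose_of_trivial]
  exact Matrix.IsSymm.exp (isSymm_lin hA hB a b)

lemma posSemidef_exp_lin (hA : A.IsSymm) (hB : B.IsSymm) (hAB : Commute A B) (a b : ℝ) :
    (exp (a • A + b • B)).PosSemidef := by
  have h2 : exp (a • A + b • B) =
      exp ((a/2) • A + (b/2) • B) * exp ((a/2) • A + (b/2) • B) := by
    rw [← exp_lin_mul hAB]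
    norm_num
  have hh := isHermitian_exp_lin hA hB (a/2) (b/2)
  rw [h2]
  nth_rewrite 1 [← hh.eq]
  exact Matrix.posSemidef_conjTranspose_mul_self _

lemma hasDerivAt_exp_lin (hAB : Commute A B) {f g : ℝ → ℝ} {f' g' t : ℝ}
    (hf : HasDerivAt f f' t) (hg : HasDerivAt g g' t) :
    HasDerivAt (fun s => exp (f s • A + g s • B))
      ((f' • A + g' • B) * exp (f t • A + g t • B)) t := by
  have key : (fun s => exp (f s • A + g s • B)) =
      fun s => exp (f s • A) * exp (g s • B) := by
    funext s
    exact Matrix.exp_add_of_commute _ _ ((hAB.smul_left _).smul_right _)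
  have hu : HasDerivAt (fun s => exp (f s • A)) (f' • (exp (f t • A) * A)) t :=
    HasDerivAt.scomp t (hasDerivAt_exp_smul_const A (f t)) hf
  have hv : HasDerivAt (fun s => exp (g s • B)) (g' • (exp (g t • B) * B)) t :=
    HasDerivAt.scomp t (hasDerivAt_exp_smul_const B (g t)) hg
  have hmul := hu.fun_mul hv
  rw [key]
  refine hmul.congr_deriv ?_
  symm
  set eA := exp (f t • A)
  set eB := exp (g t • B)
  have cA : A * eA = eA * A := (((Commute.refl A).smul_right (f t)).exp_right).eq
  have cBA : B * eA = eA * B := ((hAB.symm.smul_right (f t)).exp_right).eq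
  have cB : B * eB = eB * B := (((Commute.refl B).smul_right (g t)).exp_right).eq
  rw [Matrix.exp_add_of_commute _ _ ((hAB.smul_left _).smul_right _)]
  rw [add_mul, smul_mul_assoc, smul_mul_assoc]
  congr 1
  · rw [smul_mul_assoc, ← mul_assoc, ← cA]
  · rw [mul_smul_comm, ← mul_assoc, cBA, mul_assoc, cB]

lemma quad_eq_entry (i j : Fin n) (M : Matrix (Fin n) (Fin n) ℝ) :
    (Pi.single i 1 : Fin n → ℝ) ⬝ᵥ M.mulVec (Pi.single j 1) = M i j := by
  simp [Matrix.mulVec_single, dotProduct, Pi.single_apply, ite_mul, Finset.sum_ite_eq, Finset.sum_ite_eq']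

lemma entry_continuous {f : ℝ → Matrix (Fin n) (Fin n) ℝ} (h : Continuous f) (i j : Fin n) :
    Continuous fun s => f s i j := by
  have he : (fun s => f s i j)
      = fun s => quadCLM (Pi.single i 1) (Pi.single j 1) (f s) := by
    funext s; rw [quadCLM_apply, quad_eq_entry]
  rw [he]
  exact (quadCLM _ _).continuous.comp h

section IntJ
variable {h : ℝ → Matrix (Fin n) (Fin n) ℝ}

lemma intJ_hasDerivAt (hcont : Continuous h) (a t : ℝ) :
    HasDerivAt (fun u => (Matrix.of fun i j => ∫ s in a..u, h s i j :
      Matrix (Fin n) (Fin n) ℝ)) (h t) t := by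
  refine entry_hasDerivAt fun i j => ?_
  have hc := entry_continuous hcont i j
  exact integral_hasDerivAt_right (hc.intervalIntegrable a t)
    (hc.stronglyMeasurable.stronglyMeasurableAtFilter) hc.continuousAt

lemma intJ_add (hcont : Continuous h) (a b c : ℝ) :
    (Matrix.of fun i j => ∫ s in a..b, h s i j) + (Matrix.of fun i j => ∫ s in b..c, h s i j)
      = (Matrix.of fun i j => ∫ s in a..c, h s i j : Matrix (Fin n) (Fin n) ℝ) := by
  ext i j
  have hc := entry_continuous hcont i j
  simpa [Matrix.add_apply] using
    integral_add_adjacent_intervals (hc.intervalIntegrable a b) (hc.intervalIntegrable b c)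

lemma intJ_quad (hcont : Continuous h) (a b : ℝ) (x y : Fin n → ℝ) :
    x ⬝ᵥ (Matrix.of fun i j => ∫ s in a..b, h s i j : Matrix (Fin n) (Fin n) ℝ).mulVec y
      = ∫ s in a..b, x ⬝ᵥ (h s).mulVec y := by
  have expand : ∀ (M : Matrix (Fin n) (Fin n) ℝ),
      x ⬝ᵥ M.mulVec y = ∑ i : Fin n, ∑ j : Fin n, (x i * y j) * M i j := by
    intro M
    simp only [dotProduct, Matrix.mulVec, Finset.mul_sum]
    refine Finset.sum_congr rfl fun i _ => Finset.sum_congr rfl fun j _ => by ring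
  have step : (∫ s in a..b, x ⬝ᵥ (h s).mulVec y)
      = ∑ i : Fin n, ∑ j : Fin n, ∫ s in a..b, (x i * y j) * h s i j := by
    simp_rw [expand]
    rw [intervalIntegral.integral_finset_sum]
    · refine Finset.sum_congr rfl fun i _ => ?_
      rw [intervalIntegral.integral_finset_sum]
      intro j _
      exact (continuous_const.mul (entry_continuous hcont i j)).intervalIntegrable a b
    · intro i _
      exact (continuous_finset_sum _ fun j _ =>
        (continuous_const.mul (entry_continuous hcont i j))).intervalIntegrable a b
  rw [step, expand]
  refine Finset.sum_congr rfl fun i _ => Finset.sum_congr rfl fun j _ => ?_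
  rw [Matrix.of_apply, ← intervalIntegral.integral_const_mul]

lemma intJ_herm (hcont : Continuous h) (hherm : ∀ s, (h s).IsHermitian) (a b : ℝ) :
    (Matrix.of fun i j => ∫ s in a..b, h s i j : Matrix (Fin n) (Fin n) ℝ).IsHermitian := by
  ext i j
  simp only [Matrix.conjTranspose_apply, Matrix.of_apply, star_trivial]
  congr 1
  funext s
  have := (hherm s).eq
  calc h s j i = (h s)ᴴ j i := by rw [this]
  _ = h s i j := by simp [Matrix.conjTranspose_apply]

lemma intJ_psd (hcont : Continuous h) (hherm : ∀ s, (h s).IsHermitian)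
    {a b : ℝ} (hab : a ≤ b) (hpsd : ∀ s ∈ Set.Icc a b, (h s).PosSemidef) :
    (Matrix.of fun i j => ∫ s in a..b, h s i j : Matrix (Fin n) (Fin n) ℝ).PosSemidef := by
  refine psd_of_quad (intJ_herm hcont hherm a b) fun x => ?_
  rw [intJ_quad hcont]
  refine intervalIntegral.integral_nonneg hab fun s hs => ?_
  exact psd_quad (hpsd s hs) x
end IntJ

lemma conj_mul_conj {R : Type*} [Ring R] {e v g w : R} (hege : e * g * e = 1) :
    (e * v * e) * g * (e * w * e) = e * (v * w) * e := by
  calc (e*v*e)*g*(e*w*e) = e*v*((e*g*e)*(w*e)) := by simp only [mul_assoc]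
  _ = e*v*(w*e) := by rw [hege, one_mul]
  _ = e*(v*w)*e := by simp only [mul_assoc]

lemma wd_identity {R : Type*} [Ring R] {e v v' d g : R} (hde : d * e = e * d)
    (hege : e * g * e = 1) :
    (-(d*e) * v + e * v') * e + (e * v) * (-(d*e))
      = e * (v' - (v*v + d*v + v*d)) * e + (e*v*e) * g * (e*v*e) := by
  rw [conj_mul_conj hege]
  calc (-(d*e) * v + e * v') * e + (e * v) * (-(d*e))
      = -((d*e)*(v*e)) + e*v'*e - e*(v*d)*e := by noncomm_ring
  _ = -((e*d)*(v*e)) + e*v'*e - e*(v*d)*e := by rw [hde]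
  _ = e * (v' - (v*v + d*v + v*d)) * e + e*(v*v)*e := by noncomm_ring

section Key
variable {n : ℕ} {A B : Matrix (Fin n) (Fin n) ℝ} {γ : ℝ}

noncomputable def Emat (A B : Matrix (Fin n) (Fin n) ℝ) (γ r t : ℝ) :
    Matrix (Fin n) (Fin n) ℝ := exp (Cmat A B γ r - Cmat A B γ t)

noncomputable def Gmat (A B : Matrix (Fin n) (Fin n) ℝ) (γ r s : ℝ) :
    Matrix (Fin n) (Fin n) ℝ := exp ((2:ℝ) • Cmat A B γ s - (2:ℝ) • Cmat A B γ r)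

noncomputable def Dmat (A B : Matrix (Fin n) (Fin n) ℝ) (γ t : ℝ) :
    Matrix (Fin n) (Fin n) ℝ := Real.exp (γ * t) • A + B

noncomputable def Wmat (V : ℝ → Matrix (Fin n) (Fin n) ℝ) (A B : Matrix (Fin n) (Fin n) ℝ)
    (γ r t : ℝ) : Matrix (Fin n) (Fin n) ℝ := Emat A B γ r t * V t * Emat A B γ r t

noncomputable def Jmat (A B : Matrix (Fin n) (Fin n) ℝ) (γ r a t : ℝ) :
    Matrix (Fin n) (Fin n) ℝ := Matrix.of fun i j => ∫ s in a..t, Gmat A B γ r s i j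

lemma Cmat_sub (A B : Matrix (Fin n) (Fin n) ℝ) (γ r t : ℝ) :
    Cmat A B γ r - Cmat A B γ t =
    (Real.exp (γ * r) / γ - Real.exp (γ * t) / γ) • A + (r - t) • B := by
  simp only [Cmat]; module

lemma Emat_eq (A B : Matrix (Fin n) (Fin n) ℝ) (γ r t : ℝ) :
    Emat A B γ r t =
      exp ((Real.exp (γ * r) / γ - Real.exp (γ * t) / γ) • A + (r - t) • B) := by
  rw [Emat, Cmat_sub]

lemma Gmat_eq (A B : Matrix (Fin n) (Fin n) ℝ) (γ r s : ℝ) :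
    Gmat A B γ r s =
      exp ((2 * (Real.exp (γ * s) / γ) - 2 * (Real.exp (γ * r) / γ)) • A + (2*s - 2*r) • B) := by
  rw [Gmat, show (2:ℝ) • Cmat A B γ s - (2:ℝ) • Cmat A B γ r =
    (2 * (Real.exp (γ * s) / γ) - 2 * (Real.exp (γ * r) / γ)) • A + (2*s - 2*r) • B by
      simp only [Cmat]; module]

section Facts
variable (hA : A.IsSymm) (hB : B.IsSymm) (hC : Commute A B) (hγ : γ ≠ 0)

lemma hasDerivAt_phi (hγ : γ ≠ 0) (t : ℝ) :
    HasDerivAt (fun s => Real.exp (γ * s) / γ) (Real.exp (γ * t)) t := by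
  have h1 : HasDerivAt (fun s => γ * s) γ t := by
    simpa using (hasDerivAt_id t).const_mul γ
  have h2 : HasDerivAt (fun s => Real.exp (γ * s)) (Real.exp (γ * t) * γ) t :=
    (Real.hasDerivAt_exp (γ * t)).comp t h1
  have h3 := h2.div_const γ
  rwa [mul_div_assoc, div_self hγ, mul_one] at h3

lemma Emat_hasDerivAt (hC : Commute A B) (hγ : γ ≠ 0) (r t : ℝ) :
    HasDerivAt (Emat A B γ r) (-(Dmat A B γ t) * Emat A B γ r t) t := by
  have hf : HasDerivAt (fun s => Real.exp (γ * r) / γ - Real.exp (γ * s) / γ)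
      (-(Real.exp (γ * t))) t := (hasDerivAt_phi hγ t).const_sub _
  have hg : HasDerivAt (fun s => r - s) (-1 : ℝ) t := by
    simpa using (hasDerivAt_id t).const_sub r
  have h := hasDerivAt_exp_lin hC hf hg
  have hfun : (fun s => exp ((Real.exp (γ * r) / γ - Real.exp (γ * s) / γ) • A + (r - s) • B))
      = Emat A B γ r := by
    funext s; rw [Emat_eq]
  rw [hfun] at h
  convert h using 1
  rw [← Emat_eq]
  congr 1
  rw [Dmat]; module

lemma Emat_continuous (hC : Commute A B) (hγ : γ ≠ 0) (r : ℝ) : Continuous (Emat A B γ r) := by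
  rw [continuous_iff_continuousAt]
  exact fun t => (Emat_hasDerivAt hC hγ r t).continuousAt

lemma Gmat_hasDerivAt (hC : Commute A B) (hγ : γ ≠ 0) (r s : ℝ) :
    HasDerivAt (Gmat A B γ r)
      (((2 * Real.exp (γ * s)) • A + (2:ℝ) • B) * Gmat A B γ r s) s := by
  have hf : HasDerivAt (fun u => 2 * (Real.exp (γ * u) / γ) - 2 * (Real.exp (γ * r) / γ))
      (2 * Real.exp (γ * s)) s := (((hasDerivAt_phi hγ s).const_mul 2)).sub_const _
  have hg : HasDerivAt (fun u => 2 * u - 2 * r) (2 : ℝ) s := by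
    simpa using ((hasDerivAt_id s).const_mul 2).sub_const (2 * r)
  have h := hasDerivAt_exp_lin hC hf hg
  have hfun : (fun u => exp ((2 * (Real.exp (γ * u) / γ) - 2 * (Real.exp (γ * r) / γ)) • A
      + (2*u - 2*r) • B)) = Gmat A B γ r := by
    funext u; rw [Gmat_eq]
  rw [hfun] at h
  rwa [← Gmat_eq] at h

lemma Gmat_continuous (hC : Commute A B) (hγ : γ ≠ 0) (r : ℝ) : Continuous (Gmat A B γ r) := by
  rw [continuous_iff_continuousAt]
  exact fun s => (Gmat_hasDerivAt hC hγ r s).continuousAt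

lemma Emat_herm (hA : A.IsSymm) (hB : B.IsSymm) (r t : ℝ) : (Emat A B γ r t).IsHermitian := by
  rw [Emat_eq]; exact isHermitian_exp_lin hA hB _ _

lemma Gmat_herm (hA : A.IsSymm) (hB : B.IsSymm) (r s : ℝ) : (Gmat A B γ r s).IsHermitian := by
  rw [Gmat_eq]; exact isHermitian_exp_lin hA hB _ _

lemma Gmat_psd (hA : A.IsSymm) (hB : B.IsSymm) (hC : Commute A B) (r s : ℝ) :
    (Gmat A B γ r s).PosSemidef := by
  rw [Gmat_eq]; exact posSemidef_exp_lin hA hB hC _ _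

lemma Emat_mul_exp (hC : Commute A B) (r t : ℝ) :
    Emat A B γ r t * exp (Cmat A B γ t - Cmat A B γ r) = 1 ∧
    exp (Cmat A B γ t - Cmat A B γ r) * Emat A B γ r t = 1 := by
  constructor
  · rw [Emat_eq, Cmat_sub, ← exp_lin_mul hC]
    rw [show Real.exp (γ * r) / γ - Real.exp (γ * t) / γ +
      (Real.exp (γ * t) / γ - Real.exp (γ * r) / γ) = 0 by ring,
      show r - t + (t - r) = 0 by ring]
    simp [exp_zero]
  · rw [Emat_eq, Cmat_sub, ← exp_lin_mul hC]
    rw [show Real.exp (γ * t) / γ - Real.exp (γ * r) / γ +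
      (Real.exp (γ * r) / γ - Real.exp (γ * t) / γ) = 0 by ring,
      show t - r + (r - t) = 0 by ring]
    simp [exp_zero]

lemma Emat_unit (hC : Commute A B) (r t : ℝ) : IsUnit (Emat A B γ r t) := by
  rw [Matrix.isUnit_iff_isUnit_det]
  refine IsUnit.of_mul_eq_one (exp (Cmat A B γ t - Cmat A B γ r)).det ?_
  rw [← Matrix.det_mul, (Emat_mul_exp hC r t).1, Matrix.det_one]

lemma Emat_G_Emat (hC : Commute A B) (r t : ℝ) :
    Emat A B γ r t * Gmat A B γ r t * Emat A B γ r t = 1 := by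
  rw [Emat_eq, Gmat_eq, ← exp_lin_mul hC, ← exp_lin_mul hC]
  rw [show Real.exp (γ * r) / γ - Real.exp (γ * t) / γ +
    (2 * (Real.exp (γ * t) / γ) - 2 * (Real.exp (γ * r) / γ)) +
    (Real.exp (γ * r) / γ - Real.exp (γ * t) / γ) = 0 by ring,
    show r - t + (2*t - 2*r) + (r - t) = 0 by ring]
  simp [exp_zero]

lemma Dmat_comm_Emat (hC : Commute A B) (r t u : ℝ) :
    Dmat A B γ t * Emat A B γ r u = Emat A B γ r u * Dmat A B γ t := by
  rw [Emat_eq, Dmat, show Real.exp (γ * t) • A + B = Real.exp (γ * t) • A + (1:ℝ) • B by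
    rw [one_smul]]
  exact (commute_exp_lin hC _ _ _ _).eq

lemma Emat_self (r : ℝ) : Emat A B γ r r = 1 := by
  rw [Emat, sub_self, exp_zero]

end Facts

lemma herm_conj {n : ℕ} {M P : Matrix (Fin n) (Fin n) ℝ} (hM : M.IsHermitian)
    (hP : P.IsHermitian) : (P * M * P).IsHermitian := by
  have h := Matrix.isHermitian_mul_mul_conjTranspose P hM
  rwa [hP.eq] at h

theorem key (ε T : ℝ) (hεT : ε < T) (hγ : γ ≠ 0)
    (hA : A.IsSymm) (hB : B.IsSymm) (hAB : A * B = B * A)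
    (V V' : ℝ → Matrix (Fin n) (Fin n) ℝ)
    (hVcont : ContinuousOn V (Set.Icc ε T))
    (hVpsd : ∀ t ∈ Set.Icc ε T, (V t).PosSemidef)
    (hVε : (V ε).PosDef)
    (hVderiv : ∀ t ∈ Set.Ioo ε T, ∀ i j, HasDerivAt (fun s => V s i j) (V' t i j) t)
    (hODI : ∀ t ∈ Set.Ioo ε T,
      (V' t - (V t * V t + (Real.exp (γ * t) • A + B) * V t +
        V t * (Real.exp (γ * t) • A + B))).PosSemidef)
    (r : ℝ) :
    (∀ t ∈ Set.Icc ε T, (Wmat V A B γ r t).PosDef) ∧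
    (∀ a b, a ∈ Set.Icc ε T → b ∈ Set.Icc ε T → a ≤ b →
      (((Wmat V A B γ r a)⁻¹ + Jmat A B γ r ε a) -
        ((Wmat V A B γ r b)⁻¹ + Jmat A B γ r ε b)).PosSemidef) := by
  have hC : Commute A B := hAB
  -- the raw derivative of W
  set Wd : ℝ → Matrix (Fin n) (Fin n) ℝ := fun t =>
    (-(Dmat A B γ t * Emat A B γ r t) * V t + Emat A B γ r t * V' t) * Emat A B γ r t +
      (Emat A B γ r t * V t) * (-(Dmat A B γ t * Emat A B γ r t)) with hWddef
  have hWd : ∀ t ∈ Set.Ioo ε T, HasDerivAt (Wmat V A B γ r) (Wd t) t := by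
    intro t ht
    have hVd : HasDerivAt V (V' t) t := entry_hasDerivAt (hVderiv t ht)
    have hE := Emat_hasDerivAt hC hγ r t
    have h := (hE.fun_mul hVd).fun_mul hE
    have hfun : (fun y => Emat A B γ r y * V y * Emat A B γ r y) = Wmat V A B γ r := by
      funext y; rw [Wmat]
    rw [hfun] at h
    refine h.congr_deriv ?_
    symm
    rw [hWddef]
    simp only [neg_mul, neg_smul, smul_neg]
  -- identity for the derivative
  have hstar : ∀ t, Wd t =
      Emat A B γ r t * (V' t - (V t * V t + Dmat A B γ t * V t + V t * Dmat A B γ t)) *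
        Emat A B γ r t + Wmat V A B γ r t * Gmat A B γ r t * Wmat V A B γ r t := by
    intro t
    rw [hWddef, Wmat]
    exact wd_identity (Dmat_comm_Emat hC r t t) (Emat_G_Emat hC r t)
  have hWdpsd : ∀ t ∈ Set.Ioo ε T, (Wd t).PosSemidef := by
    intro t ht
    rw [hstar t]
    refine Matrix.PosSemidef.add ?_ ?_
    · exact psd_conj (hODI t ht) (Emat_herm hA hB r t)
    · rw [Wmat]
      exact psd_conj (Gmat_psd hA hB hC r t)
        (herm_conj (hVpsd t (Set.mem_Icc_of_Ioo ht)).1 (Emat_herm hA hB r t))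
  have hWherm : ∀ t ∈ Set.Icc ε T, (Wmat V A B γ r t).IsHermitian := by
    intro t ht
    rw [Wmat]
    exact herm_conj (hVpsd t ht).1 (Emat_herm hA hB r t)
  have hWcont : ContinuousOn (Wmat V A B γ r) (Set.Icc ε T) := by
    have h1 := (Emat_continuous hC hγ r).continuousOn (s := Set.Icc ε T)
    exact (h1.mul hVcont).mul h1
  -- monotonicity of W
  have hWmono : ∀ s t, s ∈ Set.Icc ε T → t ∈ Set.Icc ε T → s ≤ t →
      (Wmat V A B γ r t - Wmat V A B γ r s).PosSemidef := by
    intro s t hs ht hst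
    exact psd_sub_of_hasDerivAt hWherm hWcont hWd hWdpsd hs ht hst
  -- positive definiteness of W
  have hWεpd : (Wmat V A B γ r ε).PosDef := by
    rw [Wmat]
    exact posdef_conj hVε (Emat_herm hA hB r ε) (Emat_unit hC r ε)
  have hWpd : ∀ t ∈ Set.Icc ε T, (Wmat V A B γ r t).PosDef := by
    intro t ht
    have h1 := hWεpd.add_posSemidef (hWmono ε t (Set.left_mem_Icc.mpr hεT.le) ht ht.1)
    rwa [add_sub_cancel] at h1
  refine ⟨hWpd, ?_⟩
  -- derivative of U = W⁻¹
  have hWu : ∀ t ∈ Set.Icc ε T, IsUnit (Wmat V A B γ r t) := fun t ht => (hWpd t ht).isUnit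
  have hWdet : ∀ t ∈ Set.Icc ε T, IsUnit (Wmat V A B γ r t).det := fun t ht =>
    (Matrix.isUnit_iff_isUnit_det _).mp (hWu t ht)
  have hUd : ∀ t ∈ Set.Ioo ε T, HasDerivAt (fun s => (Wmat V A B γ r s)⁻¹)
      (-((Wmat V A B γ r t)⁻¹ * Wd t * (Wmat V A B γ r t)⁻¹)) t := by
    intro t ht
    have htIcc := Set.mem_Icc_of_Ioo ht
    have hu := hWu t htIcc
    have hinv := hasFDerivAt_ringInverse (𝕜 := ℝ) hu.unit
    have hc : HasDerivAt (fun s => Ring.inverse (Wmat V A B γ r s))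
        ((-((ContinuousLinearMap.mulLeftRight ℝ _) ↑hu.unit⁻¹ ↑hu.unit⁻¹)) (Wd t)) t := by
      have := hinv.comp_hasDerivAt t (hWd t ht)
      simp [IsUnit.unit_spec] at this ⊢
      exact this
    have hfun : (fun s => (Wmat V A B γ r s)⁻¹) = fun s => Ring.inverse (Wmat V A B γ r s) := by
      funext s; rw [Matrix.nonsing_inv_eq_ringInverse]
    rw [hfun]
    convert hc using 1
    have hcoe : (↑hu.unit⁻¹ : Matrix (Fin n) (Fin n) ℝ) = (Wmat V A B γ r t)⁻¹ := by
      rw [Matrix.coe_units_inv, IsUnit.unit_spec]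
    simp [hcoe, ContinuousLinearMap.mulLeftRight_apply]
  -- continuity of U
  have hUcont : ContinuousOn (fun s => (Wmat V A B γ r s)⁻¹) (Set.Icc ε T) := by
    have hfun : ∀ s, (Wmat V A B γ r s)⁻¹ =
        ((Wmat V A B γ r s).det)⁻¹ • (Wmat V A B γ r s).adjugate := by
      intro s; rw [Matrix.inv_def, Ring.inverse_eq_inv']
    simp only [hfun]
    refine ContinuousOn.fun_smul ?_ ?_
    · refine ContinuousOn.inv₀ (continuous_id.matrix_det.comp_continuousOn hWcont) ?_
      intro t ht
      exact (hWdet t ht).ne_zero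
    · exact continuous_id.matrix_adjugate.comp_continuousOn hWcont
  -- the function Ψ and its derivative
  have hJd : ∀ t, HasDerivAt (Jmat A B γ r ε) (Gmat A B γ r t) t := by
    intro t
    exact intJ_hasDerivAt (Gmat_continuous hC hγ r) ε t
  have hPsid : ∀ t ∈ Set.Ioo ε T, HasDerivAt
      (fun s => -((Wmat V A B γ r s)⁻¹ + Jmat A B γ r ε s))
      (((Wmat V A B γ r t)⁻¹ * Wd t * (Wmat V A B γ r t)⁻¹) - Gmat A B γ r t) t := by
    intro t ht
    have h := ((hUd t ht).fun_add (hJd t)).fun_neg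
    refine h.congr_deriv ?_
    symm
    abel
  have hPsidpsd : ∀ t ∈ Set.Ioo ε T,
      (((Wmat V A B γ r t)⁻¹ * Wd t * (Wmat V A B γ r t)⁻¹) - Gmat A B γ r t).PosSemidef := by
    intro t ht
    have htIcc := Set.mem_Icc_of_Ioo ht
    have hdet := hWdet t htIcc
    have h1 : (Wmat V A B γ r t)⁻¹ * (Wmat V A B γ r t * Gmat A B γ r t * Wmat V A B γ r t) *
        (Wmat V A B γ r t)⁻¹ = Gmat A B γ r t := by
      calc (Wmat V A B γ r t)⁻¹ * (Wmat V A B γ r t * Gmat A B γ r t * Wmat V A B γ r t) *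
          (Wmat V A B γ r t)⁻¹
          = ((Wmat V A B γ r t)⁻¹ * Wmat V A B γ r t) * Gmat A B γ r t *
            (Wmat V A B γ r t * (Wmat V A B γ r t)⁻¹) := by simp only [mul_assoc]
      _ = Gmat A B γ r t := by
          rw [Matrix.nonsing_inv_mul _ hdet, Matrix.mul_nonsing_inv _ hdet, one_mul, mul_one]
    have h2 : ((Wmat V A B γ r t)⁻¹ * Wd t * (Wmat V A B γ r t)⁻¹) - Gmat A B γ r t =
        (Wmat V A B γ r t)⁻¹ * (Wd t - Wmat V A B γ r t * Gmat A B γ r t * Wmat V A B γ r t) *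
          (Wmat V A B γ r t)⁻¹ := by
      rw [mul_sub, sub_mul, h1]
    rw [h2]
    refine psd_conj ?_ ((hWherm t htIcc).inv)
    rw [hstar t, add_sub_cancel_right]
    exact psd_conj (hODI t ht) (Emat_herm hA hB r t)
  -- conclude by antitonicity
  intro a b ha hb hab
  have hJcont : Continuous (Jmat A B γ r ε) := by
    rw [continuous_iff_continuousAt]; exact fun t => (hJd t).continuousAt
  have hJherm : ∀ t, (Jmat A B γ r ε t).IsHermitian := by
    intro t
    rw [Jmat]
    exact intJ_herm (Gmat_continuous hC hγ r) (Gmat_herm hA hB r) ε t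
  have hneg := psd_sub_of_hasDerivAt (f := fun s => -((Wmat V A B γ r s)⁻¹ + Jmat A B γ r ε s))
    (f' := fun t => ((Wmat V A B γ r t)⁻¹ * Wd t * (Wmat V A B γ r t)⁻¹) - Gmat A B γ r t)
    (fun t ht => (((hWherm t ht).inv.add (hJherm t)).neg))
    ((hUcont.add hJcont.continuousOn).neg) hPsid hPsidpsd ha hb hab
  rw [neg_sub_neg] at hneg
  exact hneg
end Key

lemma conj_cancel {R : Type*} [Ring R] {f e v : R} (h1 : f * e = 1) (h2 : e * f = 1) :
    f * (e * v * e) * f = v := by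
  calc f * (e * v * e) * f = f * e * (v * (e * f)) := by simp only [mul_assoc]
  _ = v := by rw [h1, h2, one_mul, mul_one]

lemma exp_eq_Emat {n : ℕ} (A B : Matrix (Fin n) (Fin n) ℝ) (γ r t : ℝ) :
    exp (Cmat A B γ t - Cmat A B γ r) = Emat A B γ t r := rfl


end Stmt12Aux

open Stmt12Aux NormedSpace

/-- **Matrix Bernoulli differential inequalities** (Lemma 8.7): if a positive-semidefinite
matrix curve `V` on `[ε,T]`, positive definite at `ε`, satisfies
`dV/dt ⪰ V² + (e^{γt}A+B)V + V(e^{γt}A+B)`, then with `C(t) = (e^{γt}/γ)A + tB`,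
(i) `V(t) ⪯ e^{C(t)−C(T)}(Id + V(T)∫ₜᵀ e^{2C(s)−2C(T)}ds)⁻¹ V(T) e^{C(t)−C(T)}`,
(ii) `V(t) ⪰ e^{C(t)−C(ε)}(Id − V(ε)∫_ε^t e^{2C(s)−2C(ε)}ds)⁻¹ V(ε) e^{C(t)−C(ε)}`,
and the right-hand side of (ii) is positive definite on `(ε,T)`. -/
theorem stmt_12 {n : ℕ} (ε T : ℝ) (hε : 0 < ε) (hεT : ε < T)
    (γ : ℝ) (hγ : γ ≠ 0)
    (A B : Matrix (Fin n) (Fin n) ℝ) (hA : A.IsSymm) (hB : B.IsSymm)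
    (hAB : A * B = B * A)
    (V V' : ℝ → Matrix (Fin n) (Fin n) ℝ)
    (hVcont : ContinuousOn V (Set.Icc ε T))
    (hVpsd : ∀ t ∈ Set.Icc ε T, (V t).PosSemidef)
    (hVε : (V ε).PosDef)
    (hVderiv : ∀ t ∈ Set.Ioo ε T, ∀ i j, HasDerivAt (fun s => V s i j) (V' t i j) t)
    (hODI : ∀ t ∈ Set.Ioo ε T,
      (V' t - (V t * V t + (Real.exp (γ * t) • A + B) * V t +
        V t * (Real.exp (γ * t) • A + B))).PosSemidef) :
    (∀ t ∈ Set.Icc ε T,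
      (NormedSpace.exp (Cmat A B γ t - Cmat A B γ T) *
          ((1 : Matrix (Fin n) (Fin n) ℝ) + V T * Matrix.of fun i j =>
            ∫ s in t..T,
              (NormedSpace.exp ((2 : ℝ) • Cmat A B γ s - (2 : ℝ) • Cmat A B γ T)) i j)⁻¹ *
          V T * NormedSpace.exp (Cmat A B γ t - Cmat A B γ T) - V t).PosSemidef) ∧
    (∀ t ∈ Set.Icc ε T,
      (V t - NormedSpace.exp (Cmat A B γ t - Cmat A B γ ε) *
          ((1 : Matrix (Fin n) (Fin n) ℝ) - V ε * Matrix.of fun i j =>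
            ∫ s in ε..t,
              (NormedSpace.exp ((2 : ℝ) • Cmat A B γ s - (2 : ℝ) • Cmat A B γ ε)) i j)⁻¹ *
          V ε * NormedSpace.exp (Cmat A B γ t - Cmat A B γ ε)).PosSemidef) ∧
    (∀ t ∈ Set.Ioo ε T,
      (NormedSpace.exp (Cmat A B γ t - Cmat A B γ ε) *
          ((1 : Matrix (Fin n) (Fin n) ℝ) - V ε * Matrix.of fun i j =>
            ∫ s in ε..t,
              (NormedSpace.exp ((2 : ℝ) • Cmat A B γ s - (2 : ℝ) • Cmat A B γ ε)) i j)⁻¹ *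
          V ε * NormedSpace.exp (Cmat A B γ t - Cmat A B γ ε)).PosDef) := by
  have hC : Commute A B := hAB
  have hεI : ε ∈ Set.Icc ε T := Set.left_mem_Icc.mpr hεT.le
  have hTI : T ∈ Set.Icc ε T := Set.right_mem_Icc.mpr hεT.le
  obtain ⟨hWpdT, hmonoT⟩ :=
    key ε T hεT hγ hA hB hAB V V' hVcont hVpsd hVε hVderiv hODI T
  obtain ⟨hWpdε, hmonoε⟩ :=
    key ε T hεT hγ hA hB hAB V V' hVcont hVpsd hVε hVderiv hODI ε
  have hWTT : Wmat V A B γ T T = V T := by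
    rw [Wmat, Emat_self, one_mul, mul_one]
  have hWεε : Wmat V A B γ ε ε = V ε := by
    rw [Wmat, Emat_self, one_mul, mul_one]
  have hVTpd : (V T).PosDef := hWTT ▸ hWpdT T hTI
  have hVTdet : IsUnit (V T).det := (Matrix.isUnit_iff_isUnit_det _).mp hVTpd.isUnit
  have hVεdet : IsUnit (V ε).det := (Matrix.isUnit_iff_isUnit_det _).mp hVε.isUnit
  -- PART (ii)+(iii) preliminary, for t ∈ Icc
  have part2 : ∀ t ∈ Set.Icc ε T,
      ((Wmat V A B γ ε t)⁻¹).PosDef ∧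
      ((V ε)⁻¹ - Jmat A B γ ε ε t).PosDef ∧
      (Wmat V A B γ ε t - ((V ε)⁻¹ - Jmat A B γ ε ε t)⁻¹).PosSemidef := by
    intro t ht
    have hJεε : Jmat A B γ ε ε ε = 0 := by
      ext i j; simp [Jmat]
    have h1 := hmonoε ε t hεI ht ht.1
    rw [hJεε, hWεε, add_zero] at h1
    set M₂ := (V ε)⁻¹ - Jmat A B γ ε ε t with hM₂def
    have hle2 : (M₂ - (Wmat V A B γ ε t)⁻¹).PosSemidef := by
      have : M₂ - (Wmat V A B γ ε t)⁻¹
          = (V ε)⁻¹ - ((Wmat V A B γ ε t)⁻¹ + Jmat A B γ ε ε t) := by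
        rw [hM₂def]; abel
      rw [this]; exact h1
    have hUtpd : ((Wmat V A B γ ε t)⁻¹).PosDef := (hWpdε t ht).inv
    obtain ⟨hM₂pd, hinv2⟩ := inv_antitone hUtpd hle2
    have hWdet : IsUnit (Wmat V A B γ ε t).det :=
      (Matrix.isUnit_iff_isUnit_det _).mp (hWpdε t ht).isUnit
    rw [Matrix.nonsing_inv_nonsing_inv _ hWdet] at hinv2
    exact ⟨hUtpd, hM₂pd, hinv2⟩
  -- the matrix appearing in parts (ii)/(iii)
  have hM₂inv : ∀ t : ℝ,
      ((1 : Matrix (Fin n) (Fin n) ℝ) - V ε * Jmat A B γ ε ε t) = V ε * ((V ε)⁻¹ - Jmat A B γ ε ε t) := by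
    intro t
    rw [mul_sub, Matrix.mul_nonsing_inv _ hVεdet]
  have hM₂inv2 : ∀ t : ℝ, ((V ε)⁻¹ - Jmat A B γ ε ε t).PosDef →
      ((1 : Matrix (Fin n) (Fin n) ℝ) - V ε * Jmat A B γ ε ε t)⁻¹ * V ε
        = ((V ε)⁻¹ - Jmat A B γ ε ε t)⁻¹ := by
    intro t hpd
    rw [hM₂inv t, Matrix.mul_inv_rev, mul_assoc, Matrix.nonsing_inv_mul _ hVεdet, mul_one]
  refine ⟨?_, ?_, ?_⟩
  · -- part (i)
    intro t ht
    have h1 := hmonoT t T ht hTI ht.2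
    have hJadd : Jmat A B γ T ε t + Jmat A B γ T t T = Jmat A B γ T ε T :=
      intJ_add (Gmat_continuous hC hγ T) ε t T
    set Mx := (V T)⁻¹ + Jmat A B γ T t T with hMxdef
    have hle : ((Wmat V A B γ T t)⁻¹ - Mx).PosSemidef := by
      have heq : (Wmat V A B γ T t)⁻¹ - Mx
          = ((Wmat V A B γ T t)⁻¹ + Jmat A B γ T ε t) -
            ((Wmat V A B γ T T)⁻¹ + Jmat A B γ T ε T) := by
        rw [hMxdef, hWTT, ← hJadd]; abel
      rw [heq]; exact h1
    have hMxpd : Mx.PosDef := by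
      refine hVTpd.inv.add_posSemidef ?_
      exact intJ_psd (Gmat_continuous hC hγ T) (Gmat_herm hA hB T) ht.2
        (fun s _ => Gmat_psd hA hB hC T s)
    obtain ⟨_, hinv⟩ := inv_antitone hMxpd hle
    have hWdet : IsUnit (Wmat V A B γ T t).det :=
      (Matrix.isUnit_iff_isUnit_det _).mp (hWpdT t ht).isUnit
    rw [Matrix.nonsing_inv_nonsing_inv _ hWdet] at hinv
    -- conjugate by F = exp (C t - C T)
    have hFherm : (exp (Cmat A B γ t - Cmat A B γ T)).IsHermitian := by
      rw [exp_eq_Emat]; exact Emat_herm hA hB t T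
    have hpsd := psd_conj hinv hFherm
    have hMxinv : ((1 : Matrix (Fin n) (Fin n) ℝ) + V T * Jmat A B γ T t T)⁻¹ * V T = Mx⁻¹ := by
      have hfact : (1 : Matrix (Fin n) (Fin n) ℝ) + V T * Jmat A B γ T t T = V T * Mx := by
        rw [hMxdef, mul_add, Matrix.mul_nonsing_inv _ hVTdet]
      rw [hfact, Matrix.mul_inv_rev, mul_assoc, Matrix.nonsing_inv_mul _ hVTdet, mul_one]
    have hgoal : exp (Cmat A B γ t - Cmat A B γ T) *
        ((1 : Matrix (Fin n) (Fin n) ℝ) + V T * Jmat A B γ T t T)⁻¹ * V T *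
          exp (Cmat A B γ t - Cmat A B γ T) - V t
        = exp (Cmat A B γ t - Cmat A B γ T) * (Mx⁻¹ - Wmat V A B γ T t) *
            exp (Cmat A B γ t - Cmat A B γ T) := by
      rw [mul_sub, sub_mul]
      congr 1
      · rw [mul_assoc _ _ (V T), hMxinv]
      · rw [Wmat]
        exact (conj_cancel (Emat_mul_exp hC T t).2 (Emat_mul_exp hC T t).1).symm
    show (exp (Cmat A B γ t - Cmat A B γ T) *
        ((1 : Matrix (Fin n) (Fin n) ℝ) + V T * Jmat A B γ T t T)⁻¹ * V T *
          exp (Cmat A B γ t - Cmat A B γ T) - V t).PosSemidef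
    rw [hgoal]
    exact hpsd
  · -- part (ii)
    intro t ht
    obtain ⟨-, hM₂pd, hws⟩ := part2 t ht
    have hFherm : (exp (Cmat A B γ t - Cmat A B γ ε)).IsHermitian := by
      rw [exp_eq_Emat]; exact Emat_herm hA hB t ε
    have hpsd := psd_conj hws hFherm
    have hgoal : V t - exp (Cmat A B γ t - Cmat A B γ ε) *
        ((1 : Matrix (Fin n) (Fin n) ℝ) - V ε * Jmat A B γ ε ε t)⁻¹ * V ε *
          exp (Cmat A B γ t - Cmat A B γ ε)
        = exp (Cmat A B γ t - Cmat A B γ ε) *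
            (Wmat V A B γ ε t - ((V ε)⁻¹ - Jmat A B γ ε ε t)⁻¹) *
            exp (Cmat A B γ t - Cmat A B γ ε) := by
      rw [mul_sub, sub_mul]
      congr 1
      · rw [Wmat]
        exact (conj_cancel (Emat_mul_exp hC ε t).2 (Emat_mul_exp hC ε t).1).symm
      · rw [mul_assoc _ _ (V ε), hM₂inv2 t hM₂pd]
    show (V t - exp (Cmat A B γ t - Cmat A B γ ε) *
        ((1 : Matrix (Fin n) (Fin n) ℝ) - V ε * Jmat A B γ ε ε t)⁻¹ * V ε *
          exp (Cmat A B γ t - Cmat A B γ ε)).PosSemidef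
    rw [hgoal]
    exact hpsd
  · -- part (iii)
    intro t ht
    obtain ⟨-, hM₂pd, -⟩ := part2 t (Set.mem_Icc_of_Ioo ht)
    have hFherm : (exp (Cmat A B γ t - Cmat A B γ ε)).IsHermitian := by
      rw [exp_eq_Emat]; exact Emat_herm hA hB t ε
    have hFunit : IsUnit (exp (Cmat A B γ t - Cmat A B γ ε)) := by
      rw [exp_eq_Emat]; exact Emat_unit hC t ε
    have hpd := posdef_conj hM₂pd.inv hFherm hFunit
    have hgoal : exp (Cmat A B γ t - Cmat A B γ ε) *
        ((1 : Matrix (Fin n) (Fin n) ℝ) - V ε * Jmat A B γ ε ε t)⁻¹ * V ε *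
          exp (Cmat A B γ t - Cmat A B γ ε)
        = exp (Cmat A B γ t - Cmat A B γ ε) * ((V ε)⁻¹ - Jmat A B γ ε ε t)⁻¹ *
            exp (Cmat A B γ t - Cmat A B γ ε) := by
      rw [mul_assoc _ _ (V ε), hM₂inv2 t hM₂pd]
    show (exp (Cmat A B γ t - Cmat A B γ ε) *
        ((1 : Matrix (Fin n) (Fin n) ℝ) - V ε * Jmat A B γ ε ε t)⁻¹ * V ε *
          exp (Cmat A B γ t - Cmat A B γ ε)).PosDef
    rw [hgoal]
    exact hpd
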